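/- Let C be a bivariate extreme value copula with upper tail dependence coefficient λ ∈ [0,1]. Then there exist real numbers a, b ≥ 0 with a + b = λ such that for all u, v ∈ [0,1], C(u,v) ≤ min{u, v, u^(1-a) · v^(1-b)}. -/

import Mathlib

open MeasureTheory Filter Set Real
open Topology

noncomputable section

/-- A bivariate copula: boundary conditions and the 2-increasing property. -/
def IsCopula (C : ℝ → ℝ → ℝ) : Prop :=
  (∀ u : ℝ, 0 ≤ u → u ≤ 1 → C u 0 = 0 ∧ C 0 u = 0 ∧ C u 1 = u ∧ C 1 u = u) ∧
  (∀ u₁ u₂ v₁ v₂ : ℝ, 0 ≤ u₁ → u₁ ≤ u₂ → u₂ ≤ 1 → 0 ≤ v₁ → v₁ ≤ v₂ → v₂ ≤ 1 →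
    0 ≤ C u₂ v₂ - C u₂ v₁ - C u₁ v₂ + C u₁ v₁)

/-- An extreme value copula: a copula satisfying the max-stability identity. -/
def IsExtremeValueCopula (C : ℝ → ℝ → ℝ) : Prop :=
  IsCopula C ∧ ∀ s : ℝ, 0 < s → ∀ u v : ℝ, 0 ≤ u → u ≤ 1 → 0 ≤ v → v ≤ 1 →
    C (u ^ s) (v ^ s) = C u v ^ s

/-- `C` has upper tail dependence coefficient `lam`,
i.e. `lam = 2 - lim_{t → 1⁻} (1 - C t t)/(1 - t)`. -/
def HasUpperTailDep (C : ℝ → ℝ → ℝ) (lam : ℝ) : Prop :=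
  Tendsto (fun t : ℝ => (1 - C t t) / (1 - t)) (nhdsWithin 1 (Set.Iio 1))
    (nhds (2 - lam))

-- auxiliary development
namespace EVAux
variable {C : ℝ → ℝ → ℝ}

lemma mono_u (hC : IsCopula C) {u u' v : ℝ} (hu : 0 ≤ u) (huu : u ≤ u') (hu1 : u' ≤ 1)
    (hv : 0 ≤ v) (hv1 : v ≤ 1) : C u v ≤ C u' v := by
  have h := hC.2 u u' 0 v hu huu hu1 le_rfl hv hv1
  have m1 := (hC.1 u hu (huu.trans hu1)).1
  have m2 := (hC.1 u' (hu.trans huu) hu1).1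
  linarith

lemma mono_v (hC : IsCopula C) {u v v' : ℝ} (hu : 0 ≤ u) (hu1 : u ≤ 1)
    (hv : 0 ≤ v) (hvv : v ≤ v') (hv1 : v' ≤ 1) : C u v ≤ C u v' := by
  have h := hC.2 0 u v v' le_rfl hu hu1 hv hvv hv1
  have m1 := (hC.1 v hv (hvv.trans hv1)).2.1
  have m2 := (hC.1 v' (hv.trans hvv) hv1).2.1
  linarith

lemma frechet (hC : IsCopula C) {u v : ℝ} (hu : 0 ≤ u) (hu1 : u ≤ 1)
    (hv : 0 ≤ v) (hv1 : v ≤ 1) : u + v - 1 ≤ C u v := by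
  have h := hC.2 u 1 v 1 hu hu1 le_rfl hv hv1 le_rfl
  have m1 := (hC.1 1 zero_le_one le_rfl).2.2.1
  have m2 := (hC.1 v hv hv1).2.2.2
  have m3 := (hC.1 u hu hu1).2.2.1
  linarith

lemma C_nonneg (hC : IsCopula C) {u v : ℝ} (hu : 0 ≤ u) (hu1 : u ≤ 1)
    (hv : 0 ≤ v) (hv1 : v ≤ 1) : 0 ≤ C u v := by
  have := mono_v hC hu hu1 le_rfl hv hv1
  rwa [(hC.1 u hu hu1).1] at this

lemma C_le_left (hC : IsCopula C) {u v : ℝ} (hu : 0 ≤ u) (hu1 : u ≤ 1)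
    (hv : 0 ≤ v) (hv1 : v ≤ 1) : C u v ≤ u := by
  have := mono_v hC hu hu1 hv hv1 le_rfl
  rwa [(hC.1 u hu hu1).2.2.1] at this

lemma C_le_right (hC : IsCopula C) {u v : ℝ} (hu : 0 ≤ u) (hu1 : u ≤ 1)
    (hv : 0 ≤ v) (hv1 : v ≤ 1) : C u v ≤ v := by
  have := mono_u hC hu hu1 le_rfl hv hv1
  rwa [(hC.1 v hv hv1).2.2.2] at this

lemma lip_u (hC : IsCopula C) {u u' v : ℝ} (hu : 0 ≤ u) (huu : u ≤ u') (hu1 : u' ≤ 1)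
    (hv : 0 ≤ v) (hv1 : v ≤ 1) : C u' v - C u v ≤ u' - u := by
  have h := hC.2 u u' v 1 hu huu hu1 hv hv1 le_rfl
  have m1 := (hC.1 u hu (huu.trans hu1)).2.2.1
  have m2 := (hC.1 u' (hu.trans huu) hu1).2.2.1
  linarith

/-- positivity of an EV copula on (0,1]² -/
lemma C_pos (hE : IsExtremeValueCopula C) {u v : ℝ} (hu : 0 < u) (hu1 : u ≤ 1)
    (hv : 0 < v) (hv1 : v ≤ 1) : 0 < C u v := by
  obtain ⟨hC, hEV⟩ := hE
  set m : ℝ := min u v with hm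
  have hm0 : 0 < m := lt_min hu hv
  have hm1 : m ≤ 1 := le_trans (min_le_left _ _) hu1
  -- find s > 0 with 1/2 < m ^ s
  have hcont : Tendsto (fun s : ℝ => m ^ s) (𝓝[>] 0) (𝓝 1) := by
    have hc : Continuous fun s : ℝ => Real.exp (Real.log m * s) :=
      Real.continuous_exp.comp (continuous_const.mul continuous_id)
    have : Tendsto (fun s : ℝ => Real.exp (Real.log m * s)) (𝓝 0) (𝓝 1) := by
      have := hc.tendsto 0
      simpa using this
    have heqf : (fun s : ℝ => m ^ s) = fun s : ℝ => Real.exp (Real.log m * s) := by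
      funext s; rw [Real.rpow_def_of_pos hm0]
    rw [heqf]
    exact this.mono_left nhdsWithin_le_nhds
  have hev : ∀ᶠ s in 𝓝[>] (0:ℝ), (1:ℝ)/2 < m ^ s := by
    have : Iio (2:ℝ) ∈ 𝓝 (1:ℝ) := Iio_mem_nhds one_lt_two
    have := hcont (Ioi_mem_nhds (by norm_num : (1:ℝ)/2 < 1))
    exact this
  obtain ⟨s, hs12, hs0⟩ := (hev.and self_mem_nhdsWithin).exists
  -- now show 0 < C m m
  have hmm : 0 < C m m := by
    by_contra h
    push_neg at h
    have h0 : C m m = 0 :=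
      le_antisymm h (C_nonneg hC hm0.le hm1 hm0.le hm1)
    have heq := hEV s hs0 m m hm0.le hm1 hm0.le hm1
    rw [h0, Real.zero_rpow (ne_of_gt hs0)] at heq
    have hms1 : m ^ s ≤ 1 := Real.rpow_le_one hm0.le hm1 hs0.le
    have := frechet hC (le_of_lt (lt_trans (by norm_num) hs12)) hms1
      (le_of_lt (lt_trans (by norm_num) hs12)) hms1
    rw [heq] at this
    linarith
  calc 0 < C m m := hmm
    _ ≤ C u m := mono_u hC hm0.le (min_le_left _ _) hu1 hm0.le hm1
    _ ≤ C u v := mono_v hC hu.le hu1 hm0.le (min_le_right _ _) hv1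


/-- the stable tail dependence function -/
def fE (C : ℝ → ℝ → ℝ) (x y : ℝ) : ℝ := -Real.log (C (Real.exp (-x)) (Real.exp (-y)))

lemma exp_neg_mem {x : ℝ} (hx : 0 ≤ x) : 0 < Real.exp (-x) ∧ Real.exp (-x) ≤ 1 :=
  ⟨Real.exp_pos _, by rw [← Real.exp_zero]; exact Real.exp_le_exp.mpr (by linarith)⟩

lemma C_fE_pos (hE : IsExtremeValueCopula C) {x y : ℝ} (hx : 0 ≤ x) (hy : 0 ≤ y) :
    0 < C (Real.exp (-x)) (Real.exp (-y)) :=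
  C_pos hE (exp_neg_mem hx).1 (exp_neg_mem hx).2 (exp_neg_mem hy).1 (exp_neg_mem hy).2

lemma exp_fE (hE : IsExtremeValueCopula C) {x y : ℝ} (hx : 0 ≤ x) (hy : 0 ≤ y) :
    Real.exp (-(fE C x y)) = C (Real.exp (-x)) (Real.exp (-y)) := by
  rw [fE, neg_neg, Real.exp_log (C_fE_pos hE hx hy)]

lemma rpow_exp_neg (x s : ℝ) : (Real.exp (-x)) ^ s = Real.exp (-(s * x)) := by
  rw [Real.rpow_def_of_pos (Real.exp_pos _), Real.log_exp]
  ring_nf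

lemma fE_homog (hE : IsExtremeValueCopula C) {x y s : ℝ} (hx : 0 ≤ x) (hy : 0 ≤ y)
    (hs : 0 < s) : fE C (s * x) (s * y) = s * fE C x y := by
  have h := hE.2 s hs (Real.exp (-x)) (Real.exp (-y))
    (exp_neg_mem hx).1.le (exp_neg_mem hx).2 (exp_neg_mem hy).1.le (exp_neg_mem hy).2
  rw [rpow_exp_neg, rpow_exp_neg] at h
  rw [fE, h, Real.log_rpow (C_fE_pos hE hx hy), fE]
  ring

lemma fE_scaled (hE : IsExtremeValueCopula C) {x y s : ℝ} (hx : 0 ≤ x) (hy : 0 ≤ y)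
    (hs : 0 < s) :
    C (Real.exp (-(s * x))) (Real.exp (-(s * y))) = Real.exp (-(s * fE C x y)) := by
  rw [← fE_homog hE hx hy hs, exp_fE hE (by positivity) (by positivity)]

lemma fE_x0 (hE : IsExtremeValueCopula C) {x : ℝ} (hx : 0 ≤ x) : fE C x 0 = x := by
  have : C (Real.exp (-x)) (Real.exp (-(0:ℝ))) = Real.exp (-x) := by
    simp only [neg_zero, Real.exp_zero]
    exact (hE.1.1 (Real.exp (-x)) (exp_neg_mem hx).1.le (exp_neg_mem hx).2).2.2.1
  rw [fE, this, Real.log_exp, neg_neg]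

lemma fE_0y (hE : IsExtremeValueCopula C) {y : ℝ} (hy : 0 ≤ y) : fE C 0 y = y := by
  have : C (Real.exp (-(0:ℝ))) (Real.exp (-y)) = Real.exp (-y) := by
    simp only [neg_zero, Real.exp_zero]
    exact (hE.1.1 (Real.exp (-y)) (exp_neg_mem hy).1.le (exp_neg_mem hy).2).2.2.2
  rw [fE, this, Real.log_exp, neg_neg]

lemma fE_mono_x (hE : IsExtremeValueCopula C) {x x' y : ℝ} (hx : 0 ≤ x) (hxx : x ≤ x')
    (hy : 0 ≤ y) : fE C x y ≤ fE C x' y := by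
  have h := mono_u hE.1 (exp_neg_mem (hx.trans hxx)).1.le
    (Real.exp_le_exp.mpr (by linarith)) (exp_neg_mem hx).2
    (exp_neg_mem hy).1.le (exp_neg_mem hy).2
  have := Real.log_le_log (C_fE_pos hE (hx.trans hxx) hy) h
  simp only [fE]
  linarith

/-- key helper: one-sided derivative sign -/
lemma deriv_le_zero_of_nonpos {φ : ℝ → ℝ} {d : ℝ} (hd : HasDerivAt φ d 0) (h0 : φ 0 = 0)
    (hneg : ∀ s : ℝ, 0 < s → φ s ≤ 0) : d ≤ 0 := by
  have hs := hasDerivAt_iff_tendsto_slope.1 hd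
  have hsub : 𝓝[>] (0:ℝ) ≤ 𝓝[≠] (0:ℝ) :=
    nhdsWithin_mono _ (fun x hx => ne_of_gt hx)
  have hs' : Tendsto (slope φ 0) (𝓝[>] (0:ℝ)) (𝓝 d) := hs.mono_left hsub
  refine le_of_tendsto hs' ?_
  filter_upwards [self_mem_nhdsWithin] with s hs0
  rw [slope_def_field]
  simp only [h0, sub_zero]
  exact div_nonpos_iff.mpr (Or.inr ⟨hneg s hs0, hs0.le⟩)

lemma deriv_ge_zero_of_nonneg {φ : ℝ → ℝ} {d : ℝ} (hd : HasDerivAt φ d 0) (h0 : φ 0 = 0)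
    (hpos : ∀ s : ℝ, 0 < s → 0 ≤ φ s) : 0 ≤ d := by
  have := deriv_le_zero_of_nonpos (hd.neg) (by simp [h0]) (fun s hs => by
    simpa using hpos s hs)
  linarith

lemma hasDerivAt_exp_neg_mul (K : ℝ) : HasDerivAt (fun s : ℝ => Real.exp (-(s * K))) (-K) 0 := by
  have h1 : HasDerivAt (fun s : ℝ => -(s * K)) (-K) 0 := by
    have h := ((hasDerivAt_id (0:ℝ)).mul_const K).neg; rw [one_mul] at h; exact h
  have h2 := (Real.hasDerivAt_exp (-(0 * K))).comp 0 h1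
  simp only [zero_mul, neg_zero, Real.exp_zero, one_mul] at h2
  exact h2

/-- submodularity of fE -/
lemma fE_submod (hE : IsExtremeValueCopula C) {x₁ x₂ y₁ y₂ : ℝ} (hx1 : 0 ≤ x₁) (hx : x₁ ≤ x₂)
    (hy1 : 0 ≤ y₁) (hy : y₁ ≤ y₂) :
    fE C x₁ y₁ + fE C x₂ y₂ ≤ fE C x₂ y₁ + fE C x₁ y₂ := by
  set A := fE C x₁ y₁
  set B := fE C x₂ y₁
  set C' := fE C x₁ y₂
  set D := fE C x₂ y₂
  set φ : ℝ → ℝ := fun s => (Real.exp (-(s * B)) + Real.exp (-(s * C')))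
    - (Real.exp (-(s * A)) + Real.exp (-(s * D))) with hφ
  have hd : HasDerivAt φ ((-B + -C') - (-A + -D)) 0 :=
    (((hasDerivAt_exp_neg_mul B).add (hasDerivAt_exp_neg_mul C')).sub
      ((hasDerivAt_exp_neg_mul A).add (hasDerivAt_exp_neg_mul D)))
  have h0 : φ 0 = 0 := by simp [hφ]
  have hneg : ∀ s : ℝ, 0 < s → φ s ≤ 0 := by
    intro s hs
    have hx2 : 0 ≤ x₂ := hx1.trans hx
    have hy2 : 0 ≤ y₂ := hy1.trans hy
    have h2inc := hE.1.2 (Real.exp (-(s * x₂))) (Real.exp (-(s * x₁)))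
      (Real.exp (-(s * y₂))) (Real.exp (-(s * y₁)))
      (exp_neg_mem (by positivity)).1.le
      (Real.exp_le_exp.mpr (by nlinarith))
      (exp_neg_mem (by positivity)).2
      (exp_neg_mem (by positivity)).1.le
      (Real.exp_le_exp.mpr (by nlinarith))
      (exp_neg_mem (by positivity)).2
    rw [fE_scaled hE hx1 hy1 hs, fE_scaled hE hx2 hy2 hs, fE_scaled hE hx1 hy2 hs,
      fE_scaled hE hx2 hy1 hs] at h2inc
    simp only [hφ]
    linarith
  have := deriv_le_zero_of_nonpos hd h0 hneg
  linarith

/-- Lipschitz property of fE in the first variable -/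
lemma fE_lip (hE : IsExtremeValueCopula C) {x y h : ℝ} (hx : 0 ≤ x) (hy : 0 ≤ y)
    (hh : 0 ≤ h) : fE C (x + h) y ≤ fE C x y + h := by
  set F := fE C x y
  set F' := fE C (x + h) y
  set φ : ℝ → ℝ := fun s => (Real.exp (-(s * F')) + Real.exp (-(s * x)))
    - (Real.exp (-(s * F)) + Real.exp (-(s * (x + h)))) with hφ
  have hd : HasDerivAt φ ((-F' + -x) - (-F + -(x + h))) 0 :=
    (((hasDerivAt_exp_neg_mul F').add (hasDerivAt_exp_neg_mul x)).sub
      ((hasDerivAt_exp_neg_mul F).add (hasDerivAt_exp_neg_mul (x + h))))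
  have h0 : φ 0 = 0 := by simp [hφ]
  have hpos : ∀ s : ℝ, 0 < s → 0 ≤ φ s := by
    intro s hs
    have hlip := lip_u hE.1 (u := Real.exp (-(s * (x + h)))) (u' := Real.exp (-(s * x)))
      (v := Real.exp (-(s * y)))
      (exp_neg_mem (by positivity)).1.le
      (Real.exp_le_exp.mpr (by nlinarith))
      (exp_neg_mem (by positivity)).2
      (exp_neg_mem (by positivity)).1.le
      (exp_neg_mem (by positivity)).2
    rw [fE_scaled hE hx hy hs, fE_scaled hE (by linarith : (0:ℝ) ≤ x + h) hy hs] at hlip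
    simp only [hφ]
    linarith
  have := deriv_ge_zero_of_nonneg hd h0 hpos
  simp only [F, F'] at this ⊢
  linarith

/-- the Pickands-type profile function -/
def psiE (C : ℝ → ℝ → ℝ) (x : ℝ) : ℝ := fE C (max x 0) 1

lemma psiE_of_nonneg {x : ℝ} (hx : 0 ≤ x) : psiE C x = fE C x 1 := by
  rw [psiE, max_eq_left hx]

lemma psiE_mono (hE : IsExtremeValueCopula C) : Monotone (psiE C) := by
  intro x x' hxx
  exact fE_mono_x hE (le_max_right _ _) (max_le_max hxx le_rfl) zero_le_one

lemma psiE_add_le (hE : IsExtremeValueCopula C) (x : ℝ) {h : ℝ} (hh : 0 ≤ h) :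
    psiE C (x + h) ≤ psiE C x + h := by
  have h1 : max (x + h) 0 ≤ max x 0 + h := by
    rcases le_or_gt x 0 with hx | hx
    · simp only [max_le_iff]
      constructor <;> [skip; positivity]
      have : max x 0 = 0 ∨ max x 0 = x := by rcases max_cases x 0 with ⟨h,_⟩|⟨h,_⟩ <;> simp [h]
      nlinarith [le_max_right x 0]
    · rw [max_eq_left hx.le, max_eq_left (by linarith)]
  calc psiE C (x + h) = fE C (max (x+h) 0) 1 := rfl
    _ ≤ fE C (max x 0 + (max (x+h) 0 - max x 0)) 1 := by ring_nf; exact le_rfl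
    _ ≤ fE C (max x 0) 1 + (max (x+h) 0 - max x 0) := by
        apply fE_lip hE (le_max_right _ _) zero_le_one
        have : max x 0 ≤ max (x+h) 0 := max_le_max (by linarith) le_rfl
        linarith
    _ ≤ psiE C x + h := by
        have : max (x+h) 0 - max x 0 ≤ h := by linarith
        simp only [psiE]; linarith

lemma psiE_lipschitz (hE : IsExtremeValueCopula C) : LipschitzWith 1 (psiE C) := by
  apply LipschitzWith.of_dist_le_mul
  intro a b
  rw [Real.dist_eq, Real.dist_eq]
  push_cast
  rw [one_mul]
  rcases le_total a b with hab | hab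
  · have h1 : psiE C a ≤ psiE C b := psiE_mono hE hab
    have h2 : psiE C b ≤ psiE C a + (b - a) := by
      have := psiE_add_le hE a (by linarith : (0:ℝ) ≤ b - a)
      simpa using this
    rw [abs_of_nonpos (by linarith), abs_of_nonpos (by linarith)]
    linarith
  · have h1 : psiE C b ≤ psiE C a := psiE_mono hE hab
    have h2 : psiE C a ≤ psiE C b + (a - b) := by
      have := psiE_add_le hE b (by linarith : (0:ℝ) ≤ a - b)
      simpa using this
    rw [abs_of_nonneg (by linarith), abs_of_nonneg (by linarith)]
    linarith

/-- dilation inequality for increments -/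
lemma psiE_star (hE : IsExtremeValueCopula C) {s x h : ℝ} (hs : 1 ≤ s) (hx : 0 ≤ x)
    (hh : 0 ≤ h) : s * (psiE C (x + h) - psiE C x) ≤ psiE C (s * (x + h)) - psiE C (s * x) := by
  have hs0 : 0 < s := lt_of_lt_of_le one_pos hs
  have hinv : (0:ℝ) < 1 / s := by positivity
  have hinvle : 1 / s ≤ 1 := by
    rw [div_le_one hs0]; exact hs
  -- submodularity: fE x (1/s) + fE (x+h) 1 ≤ fE (x+h) (1/s) + fE x 1
  have hsub := fE_submod hE (x₁ := x) (x₂ := x + h) (y₁ := 1/s) (y₂ := 1)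
    hx (by linarith) hinv.le hinvle
  -- homogeneity : fE z (1/s) = (1/s) * fE (s*z) 1  for z ≥ 0
  have hom : ∀ z : ℝ, 0 ≤ z → fE C z (1/s) = (1/s) * fE C (s * z) 1 := by
    intro z hz
    have := fE_homog hE (x := s * z) (y := 1) (s := 1/s) (by positivity) zero_le_one hinv
    have hz' : 1/s * (s * z) = z := by field_simp
    rw [hz', mul_one] at this
    rw [this]
  rw [hom x hx, hom (x + h) (by linarith)] at hsub
  rw [psiE_of_nonneg (by linarith), psiE_of_nonneg hx,
    psiE_of_nonneg (by positivity), psiE_of_nonneg (by positivity)]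
  have := mul_le_mul_of_nonneg_left hsub hs0.le
  have hne : s ≠ 0 := hs0.ne'
  field_simp at this
  nlinarith [this]

lemma slope_nonneg (hE : IsExtremeValueCopula C) (x : ℝ) {t : ℝ} (ht : t ≠ 0) :
    0 ≤ t⁻¹ * (psiE C (x + t) - psiE C x) := by
  rcases lt_or_gt_of_ne ht with h | h
  · have h1 : psiE C (x + t) ≤ psiE C x := psiE_mono hE (by linarith)
    have h2 : t⁻¹ ≤ 0 := inv_nonpos.mpr h.le
    exact mul_nonneg_iff.mpr (Or.inr ⟨h2, by linarith⟩)
  · have h1 : psiE C x ≤ psiE C (x + t) := psiE_mono hE (by linarith)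
    exact mul_nonneg (inv_nonneg.mpr h.le) (by linarith)

lemma slope_le_one (hE : IsExtremeValueCopula C) (x : ℝ) {t : ℝ} (ht : t ≠ 0) :
    t⁻¹ * (psiE C (x + t) - psiE C x) ≤ 1 := by
  have hdiv : t⁻¹ * (psiE C (x + t) - psiE C x) = (psiE C (x + t) - psiE C x) / t := by
    ring
  rw [hdiv]
  rcases lt_or_gt_of_ne ht with h | h
  · have h1 : psiE C x ≤ psiE C (x + t) + (-t) := by
      have := psiE_add_le hE (x + t) (by linarith : (0:ℝ) ≤ -t)
      simpa using this
    rw [div_le_one_iff]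
    exact Or.inr (Or.inr ⟨h, by linarith⟩)
  · have h1 : psiE C (x + t) ≤ psiE C x + t := psiE_add_le hE x h.le
    rw [div_le_one h]
    linarith

lemma deriv_psiE_mem (hE : IsExtremeValueCopula C) (x : ℝ) :
    deriv (psiE C) x ∈ Icc (0:ℝ) 1 := by
  by_cases hdiff : DifferentiableAt ℝ (psiE C) x
  · have hd : HasDerivAt (psiE C) (deriv (psiE C) x) x := hdiff.hasDerivAt
    have hslope := hasDerivAt_iff_tendsto_slope_zero.1 hd
    constructor
    · refine ge_of_tendsto hslope ?_
      filter_upwards [self_mem_nhdsWithin] with t ht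
      have := slope_nonneg hE x (by simpa using ht)
      simpa using this
    · refine le_of_tendsto hslope ?_
      filter_upwards [self_mem_nhdsWithin] with t ht
      have := slope_le_one hE x (by simpa using ht)
      simpa using this
  · rw [deriv_zero_of_not_differentiableAt hdiff]
    exact ⟨le_rfl, zero_le_one⟩

/-- monotonicity of the derivative along dilations -/
lemma deriv_psiE_mono (hE : IsExtremeValueCopula C) {w x : ℝ} (hw : 0 < w) (hwx : w ≤ x)
    (hdw : DifferentiableAt ℝ (psiE C) w) (hdx : DifferentiableAt ℝ (psiE C) x) :
    deriv (psiE C) w ≤ deriv (psiE C) x := by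
  set s : ℝ := x / w with hs
  have hs1 : 1 ≤ s := (one_le_div hw).mpr hwx
  have hs0 : 0 < s := lt_of_lt_of_le one_pos hs1
  have hsw : s * w = x := by rw [hs]; exact div_mul_cancel₀ x hw.ne'
  -- slopes at w and x
  have hdwT := hasDerivAt_iff_tendsto_slope_zero.1 hdw.hasDerivAt
  have hdxT := hasDerivAt_iff_tendsto_slope_zero.1 hdx.hasDerivAt
  -- restrict to 𝓝[>] 0
  have hsub : 𝓝[>] (0:ℝ) ≤ 𝓝[≠] (0:ℝ) := nhdsWithin_mono _ (fun t ht => ne_of_gt ht)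
  have T1 : Tendsto (fun h : ℝ => h⁻¹ * (psiE C (w + h) - psiE C w)) (𝓝[>] 0)
      (𝓝 (deriv (psiE C) w)) := by
    have := hdwT.mono_left hsub
    simpa [smul_eq_mul] using this
  have Tmul : Tendsto (fun h : ℝ => s * h) (𝓝[>] (0:ℝ)) (𝓝[≠] (0:ℝ)) := by
    apply Tendsto.mono_right _ hsub
    rw [tendsto_nhdsWithin_iff]
    constructor
    · have : Tendsto (fun h : ℝ => s * h) (𝓝 0) (𝓝 (s * 0)) :=
        (continuous_const.mul continuous_id).tendsto 0
      simpa using this.mono_left nhdsWithin_le_nhds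
    · filter_upwards [self_mem_nhdsWithin] with t ht
      exact mul_pos hs0 ht
  have T2 : Tendsto (fun h : ℝ => (s*h)⁻¹ * (psiE C (x + s*h) - psiE C x)) (𝓝[>] 0)
      (𝓝 (deriv (psiE C) x)) := by
    have := hdxT.comp Tmul
    simpa only [Function.comp_def, smul_eq_mul] using this
  refine le_of_tendsto_of_tendsto T1 T2 ?_
  filter_upwards [self_mem_nhdsWithin] with h hh
  have hh' : 0 < h := hh
  have hstar := psiE_star hE hs1 hw.le (le_of_lt hh')
  rw [hsw] at hstar
  have hd1 : s * (w + h) = x + s * h := by rw [mul_add, hsw]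
  rw [hd1] at hstar
  have h1 : h⁻¹ * (psiE C (w + h) - psiE C w)
      = (s*h)⁻¹ * (s * (psiE C (w + h) - psiE C w)) := by
    rw [mul_inv]
    field_simp
  rw [h1]
  exact mul_le_mul_of_nonneg_left hstar (by positivity)

lemma seq_tendsto_zero_ne : Tendsto (fun n : ℕ => 1/((n:ℝ)+1)) atTop (𝓝[≠] (0:ℝ)) := by
  rw [tendsto_nhdsWithin_iff]
  constructor
  · exact tendsto_one_div_add_atTop_nhds_zero_nat
  · filter_upwards with n
    have : (0:ℝ) < 1/((n:ℝ)+1) := by positivity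
    exact ne_of_gt this

/-- fundamental theorem of calculus for the Lipschitz monotone function psiE -/
lemma psiE_ftc (hE : IsExtremeValueCopula C) {a b : ℝ} (hab : a ≤ b) :
    ∫ x in a..b, deriv (psiE C) x = psiE C b - psiE C a := by
  set ψ := psiE C with hψ
  have hcont : Continuous ψ := (psiE_lipschitz hE).continuous
  set F : ℕ → ℝ → ℝ := fun n x => (ψ (x + 1/((n:ℝ)+1)) - ψ x) * ((n:ℝ)+1) with hF
  -- the DCT limit
  have hDCT : Tendsto (fun n => ∫ x in a..b, F n x) atTop (𝓝 (∫ x in a..b, deriv ψ x)) := by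
    apply intervalIntegral.tendsto_integral_filter_of_dominated_convergence
      (bound := fun _ => (1:ℝ))
    · filter_upwards with n
      exact (((hcont.comp (continuous_id.add continuous_const)).sub hcont).mul
        continuous_const).aestronglyMeasurable
    · filter_upwards with n
      filter_upwards with x _
      have h1 : (0:ℝ) < 1/((n:ℝ)+1) := by positivity
      have h2 : ψ x ≤ ψ (x + 1/((n:ℝ)+1)) := psiE_mono hE (by linarith)
      have h3 : ψ (x + 1/((n:ℝ)+1)) ≤ ψ x + 1/((n:ℝ)+1) := psiE_add_le hE x h1.le
      simp only [hF, Real.norm_eq_abs]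
      rw [abs_of_nonneg (mul_nonneg (by linarith) (by positivity))]
      have : (ψ (x + 1/((n:ℝ)+1)) - ψ x) * ((n:ℝ)+1) ≤ (1/((n:ℝ)+1)) * ((n:ℝ)+1) := by
        apply mul_le_mul_of_nonneg_right (by linarith) (by positivity)
      calc (ψ (x + 1/((n:ℝ)+1)) - ψ x) * ((n:ℝ)+1) ≤ (1/((n:ℝ)+1)) * ((n:ℝ)+1) := this
        _ = 1 := by field_simp
    · exact intervalIntegrable_const
    · have hae := (psiE_mono hE).ae_differentiableAt
      filter_upwards [hae] with x hx _
      have hd := hasDerivAt_iff_tendsto_slope_zero.1 hx.hasDerivAt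
      have := hd.comp seq_tendsto_zero_ne
      apply this.congr
      intro n
      simp only [Function.comp_def, smul_eq_mul, hF, hψ]
      rw [one_div, inv_inv]
      ring
  -- direct computation of the integrals
  have hint : ∀ (c d : ℝ), IntervalIntegrable ψ volume c d := fun c d =>
    hcont.intervalIntegrable c d
  have hcomp : ∀ n : ℕ, ∫ x in a..b, F n x
      = ((∫ x in b..(b + 1/((n:ℝ)+1)), ψ x) - ∫ x in a..(a + 1/((n:ℝ)+1)), ψ x) * ((n:ℝ)+1) := by
    intro n
    set h := 1/((n:ℝ)+1) with hh
    have i1 : IntervalIntegrable (fun x => ψ (x + h)) volume a b :=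
      Continuous.intervalIntegrable (by continuity) a b
    have e1 : ∫ x in a..b, F n x
        = ((∫ x in a..b, ψ (x + h)) - ∫ x in a..b, ψ x) * ((n:ℝ)+1) := by
      rw [← intervalIntegral.integral_sub i1 (hint a b), ← intervalIntegral.integral_mul_const]
    have e2 : (∫ x in a..b, ψ (x + h)) = ∫ x in (a+h)..(b+h), ψ x :=
      intervalIntegral.integral_comp_add_right ψ h
    have e3 : (∫ x in (a+h)..(b+h), ψ x) - (∫ x in a..b, ψ x)
        = (∫ x in b..(b+h), ψ x) - ∫ x in a..(a+h), ψ x := by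
      have A1 : (∫ x in a..(a+h), ψ x) + (∫ x in (a+h)..(b+h), ψ x)
          = ∫ x in a..(b+h), ψ x := intervalIntegral.integral_add_adjacent_intervals
            (hint _ _) (hint _ _)
      have A2 : (∫ x in a..b, ψ x) + (∫ x in b..(b+h), ψ x)
          = ∫ x in a..(b+h), ψ x := intervalIntegral.integral_add_adjacent_intervals
            (hint _ _) (hint _ _)
      linarith
    rw [e1, e2, e3]
  have hbnd : ∀ c : ℝ, Tendsto (fun n : ℕ => (∫ x in c..(c + 1/((n:ℝ)+1)), ψ x) * ((n:ℝ)+1))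
      atTop (𝓝 (ψ c)) := by
    intro c
    have hG := (hcont.integral_hasStrictDerivAt c c).hasDerivAt
    have hd := hasDerivAt_iff_tendsto_slope_zero.1 hG
    have := hd.comp seq_tendsto_zero_ne
    apply this.congr
    intro n
    simp only [Function.comp_def, smul_eq_mul]
    rw [intervalIntegral.integral_same, sub_zero, one_div, inv_inv]
    ring
  have hDirect : Tendsto (fun n => ∫ x in a..b, F n x) atTop (𝓝 (ψ b - ψ a)) := by
    have := (hbnd b).sub (hbnd a)
    apply this.congr
    intro n
    rw [hcomp n]
    ring
  exact tendsto_nhds_unique hDCT hDirect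

lemma deriv_psiE_intervalIntegrable (hE : IsExtremeValueCopula C) (c d : ℝ) :
    IntervalIntegrable (deriv (psiE C)) volume c d := by
  rw [intervalIntegrable_iff]
  apply Measure.integrableOn_of_bounded (M := 1)
  · rw [Set.uIoc]
    exact measure_Ioc_lt_top.ne
  · exact (measurable_deriv (psiE C)).aestronglyMeasurable
  · filter_upwards with x
    rw [Real.norm_eq_abs, abs_le]
    rcases deriv_psiE_mem hE x with ⟨h1, h2⟩
    exact ⟨by linarith, h2⟩

/-- existence of the supporting line at z = 1 -/
lemma exists_support (hE : IsExtremeValueCopula C) :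
    ∃ α : ℝ, 0 ≤ α ∧ α ≤ 1 ∧
      ∀ z : ℝ, 0 ≤ z → psiE C 1 + α * (z - 1) ≤ psiE C z := by
  classical
  set ψ := psiE C with hψ
  set S : Set ℝ := {y : ℝ | ∃ x : ℝ, 1 < x ∧ DifferentiableAt ℝ ψ x ∧ deriv ψ x = y} with hS
  have hae : ∀ᵐ x ∂(volume : Measure ℝ), DifferentiableAt ℝ ψ x :=
    (psiE_mono hE).ae_differentiableAt
  have hSne : S.Nonempty := by
    have h1 : ∀ᵐ x ∂((volume : Measure ℝ).restrict (Ioi (1:ℝ))), DifferentiableAt ℝ ψ x :=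
      ae_restrict_of_ae hae
    haveI : NeBot (ae ((volume : Measure ℝ).restrict (Ioi (1:ℝ)))) := by
      rw [ae_neBot, Ne, Measure.restrict_eq_zero]
      simp [Real.volume_Ioi]
    obtain ⟨x, hx1, hx2⟩ := (h1.and (ae_restrict_mem measurableSet_Ioi)).exists
    exact ⟨deriv ψ x, x, hx2, hx1, rfl⟩
  have hSbdd : BddBelow S := by
    refine ⟨0, fun y hy => ?_⟩
    obtain ⟨x, _, _, rfl⟩ := hy
    exact (deriv_psiE_mem hE x).1
  set α : ℝ := sInf S with hα
  have hα0 : 0 ≤ α := by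
    apply le_csInf hSne
    intro y hy
    obtain ⟨x, _, _, rfl⟩ := hy
    exact (deriv_psiE_mem hE x).1
  have hα1 : α ≤ 1 := by
    obtain ⟨y, hy⟩ := hSne
    refine csInf_le_of_le hSbdd hy ?_
    obtain ⟨x, _, _, rfl⟩ := hy
    exact (deriv_psiE_mem hE x).2
  have h_ne : ∀ c : ℝ, ∀ᵐ x ∂(volume : Measure ℝ), x ≠ c := by
    intro c
    have : (volume : Measure ℝ) {c} = 0 := Real.volume_singleton
    have h2 := measure_eq_zero_iff_ae_notMem.mp this
    filter_upwards [h2] with x hx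
    simpa using hx
  refine ⟨α, hα0, hα1, ?_⟩
  intro z hz
  rcases le_total 1 z with h1z | h1z
  · -- right side: ψ z - ψ 1 ≥ α (z-1)
    have hftc := psiE_ftc hE (a := 1) (b := z) h1z
    have hmono : (∫ x in (1:ℝ)..z, α) ≤ ∫ x in (1:ℝ)..z, deriv ψ x := by
      apply intervalIntegral.integral_mono_ae_restrict h1z
        intervalIntegrable_const (deriv_psiE_intervalIntegrable hE 1 z)
      filter_upwards [ae_restrict_mem measurableSet_Icc, ae_restrict_of_ae hae,
        ae_restrict_of_ae (h_ne 1)] with x hx hdx hne1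
      have hx1 : 1 < x := lt_of_le_of_ne hx.1 (Ne.symm hne1)
      exact csInf_le hSbdd ⟨x, hx1, hdx, rfl⟩
    rw [intervalIntegral.integral_const, smul_eq_mul] at hmono
    rw [hftc] at hmono
    linarith [hmono]
  · -- left side: ψ 1 - ψ z ≤ α (1-z)
    have hftc := psiE_ftc hE (a := z) (b := 1) h1z
    have hmono : (∫ x in z..(1:ℝ), deriv ψ x) ≤ ∫ x in z..(1:ℝ), α := by
      apply intervalIntegral.integral_mono_ae_restrict h1z
        (deriv_psiE_intervalIntegrable hE z 1) intervalIntegrable_const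
      filter_upwards [ae_restrict_mem measurableSet_Icc, ae_restrict_of_ae hae,
        ae_restrict_of_ae (h_ne 0), ae_restrict_of_ae (h_ne 1)] with x hx hdx hne0 hne1
      have hx0 : 0 < x := lt_of_le_of_ne (hz.trans hx.1) (Ne.symm hne0)
      -- deriv ψ x is a lower bound for S
      apply le_csInf hSne
      intro y hy
      obtain ⟨x', hx'1, hdx', rfl⟩ := hy
      exact deriv_psiE_mono hE hx0 (le_of_lt (lt_of_le_of_lt
        (lt_of_le_of_ne hx.2 hne1).le hx'1)) hdx hdx'
    rw [intervalIntegral.integral_const, smul_eq_mul] at hmono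
    rw [hftc] at hmono
    linarith [hmono]

lemma psiE_zero (hE : IsExtremeValueCopula C) : psiE C 0 = 1 := by
  rw [psiE_of_nonneg le_rfl, fE_0y hE zero_le_one]

lemma diag_pow (hE : IsExtremeValueCopula C) {t : ℝ} (ht0 : 0 < t) (ht1 : t < 1) :
    C t t = t ^ (psiE C 1) := by
  set x : ℝ := -Real.log t with hx
  have hx0 : 0 < x := by
    rw [hx, neg_pos]
    exact Real.log_neg ht0 ht1
  have hexp : Real.exp (-x) = t := by rw [hx, neg_neg, Real.exp_log ht0]
  have hhom := fE_homog hE (x := 1) (y := 1) (s := x) zero_le_one zero_le_one hx0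
  rw [mul_one] at hhom
  have hC : C t t = Real.exp (-(fE C x x)) := by
    rw [exp_fE hE hx0.le hx0.le, hexp]
  rw [hC, hhom, psiE_of_nonneg zero_le_one]
  rw [Real.rpow_def_of_pos ht0]
  congr 1
  rw [hx]
  ring

lemma theta_eq (hE : IsExtremeValueCopula C) {lam : ℝ}
    (hU : Tendsto (fun t : ℝ => (1 - C t t) / (1 - t)) (𝓝[<] (1:ℝ)) (𝓝 (2 - lam))) :
    psiE C 1 = 2 - lam := by
  set θ := psiE C 1 with hθ
  have hder : HasDerivAt (fun t : ℝ => t ^ θ) θ 1 := by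
    have := Real.hasDerivAt_rpow_const (x := 1) (p := θ) (Or.inl one_ne_zero)
    simpa using this
  have hslope := hasDerivAt_iff_tendsto_slope.1 hder
  have hsub : 𝓝[<] (1:ℝ) ≤ 𝓝[≠] (1:ℝ) := nhdsWithin_mono _ (fun t ht => ne_of_lt ht)
  have hT : Tendsto (fun t : ℝ => (1 - C t t) / (1 - t)) (𝓝[<] (1:ℝ)) (𝓝 θ) := by
    have h1 : Tendsto (slope (fun t : ℝ => t ^ θ) 1) (𝓝[<] (1:ℝ)) (𝓝 θ) :=
      hslope.mono_left hsub
    apply h1.congr'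
    have hpos : ∀ᶠ t in 𝓝[<] (1:ℝ), 0 < t :=
      (eventually_gt_nhds one_pos).filter_mono nhdsWithin_le_nhds
    filter_upwards [hpos, self_mem_nhdsWithin] with t ht0 ht1
    have ht1' : t < 1 := ht1
    rw [slope_def_field, diag_pow hE ht0 ht1', Real.one_rpow]
    rw [div_eq_div_iff (by linarith) (by linarith)]
    ring
  exact tendsto_nhds_unique hT hU

/-- the central bound: C u v ≤ u^α v^(θ-α) -/
lemma key_bound (hE : IsExtremeValueCopula C) {α : ℝ} (hα1 : α ≤ 1)
    (hsupp : ∀ z : ℝ, 0 ≤ z → psiE C 1 + α * (z - 1) ≤ psiE C z)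
    {u v : ℝ} (hu : 0 < u) (hu1 : u ≤ 1) (hv : 0 < v) (hv1 : v ≤ 1) :
    C u v ≤ u ^ α * v ^ (psiE C 1 - α) := by
  set θ := psiE C 1 with hθ
  set x : ℝ := -Real.log u with hx
  set y : ℝ := -Real.log v with hy
  have hx0 : 0 ≤ x := by rw [hx, neg_nonneg]; exact Real.log_nonpos hu.le hu1
  have hy0 : 0 ≤ y := by rw [hy, neg_nonneg]; exact Real.log_nonpos hv.le hv1
  have hxu : Real.exp (-x) = u := by rw [hx, neg_neg, Real.exp_log hu]
  have hyv : Real.exp (-y) = v := by rw [hy, neg_neg, Real.exp_log hv]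
  have hkey : α * x + (θ - α) * y ≤ fE C x y := by
    rcases eq_or_lt_of_le hy0 with hy' | hy'
    · rw [← hy', mul_zero, add_zero, fE_x0 hE hx0]
      nlinarith [hx0, hα1]
    · -- y > 0
      have hzy : 0 ≤ x / y := by positivity
      have hs := hsupp (x / y) hzy
      rw [psiE_of_nonneg hzy] at hs
      have hfxy : fE C x y = y * fE C (x/y) 1 := by
        have := fE_homog hE (x := x/y) (y := 1) (s := y) hzy zero_le_one hy'
        rw [mul_one] at this
        have hxy : y * (x/y) = x := by field_simp
        rw [hxy] at this
        rw [this]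
      rw [hfxy]
      have := mul_le_mul_of_nonneg_left hs hy0
      calc α * x + (θ - α) * y = y * (θ + α * (x/y - 1)) := by
            field_simp
            ring
        _ ≤ y * fE C (x/y) 1 := this
  -- convert to the copula inequality
  have hC : C u v = Real.exp (-(fE C x y)) := by rw [exp_fE hE hx0 hy0, hxu, hyv]
  rw [hC]
  have e1 : u ^ α = Real.exp (-(α * x)) := by rw [← hxu, rpow_exp_neg]
  have e2 : v ^ (θ - α) = Real.exp (-((θ - α) * y)) := by rw [← hyv, rpow_exp_neg]
  rw [e1, e2, ← Real.exp_add]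
  apply Real.exp_le_exp.mpr
  linarith

end EVAux

theorem stmt_1 (C : ℝ → ℝ → ℝ) (lam : ℝ) (hlam : lam ∈ Set.Icc (0:ℝ) 1)
    (hC : IsExtremeValueCopula C) (hU : HasUpperTailDep C lam) :
    ∃ a b : ℝ, 0 ≤ a ∧ 0 ≤ b ∧ a + b = lam ∧
      ∀ u v : ℝ, u ∈ Set.Icc (0:ℝ) 1 → v ∈ Set.Icc (0:ℝ) 1 →
        C u v ≤ min u (min v (u ^ (1 - a) * v ^ (1 - b))) := by
  obtain ⟨α, hα0, hα1, hsupp⟩ := EVAux.exists_support hC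
  have hθlam : EVAux.psiE C 1 = 2 - lam := EVAux.theta_eq hC hU
  set θ := EVAux.psiE C 1 with hθ
  have hb0 : θ - α ≤ 1 := by
    have h0 := hsupp 0 le_rfl
    rw [EVAux.psiE_zero hC] at h0
    linarith
  refine ⟨1 - α, 1 - (θ - α), by linarith, by linarith, by linarith, ?_⟩
  intro u v hu hv
  have e1 : (1 : ℝ) - (1 - α) = α := by ring
  have e2 : (1 : ℝ) - (1 - (θ - α)) = θ - α := by ring
  rw [e1, e2]
  refine le_min (EVAux.C_le_left hC.1 hu.1 hu.2 hv.1 hv.2)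
    (le_min (EVAux.C_le_right hC.1 hu.1 hu.2 hv.1 hv.2) ?_)
  rcases eq_or_lt_of_le hu.1 with hu0 | hu0
  · rw [← hu0]
    rw [(hC.1.1 v hv.1 hv.2).2.1]
    exact mul_nonneg (Real.rpow_nonneg le_rfl _) (Real.rpow_nonneg hv.1 _)
  rcases eq_or_lt_of_le hv.1 with hv0 | hv0
  · rw [← hv0]
    rw [(hC.1.1 u hu.1 hu.2).1]
    exact mul_nonneg (Real.rpow_nonneg hu.1 _) (Real.rpow_nonneg le_rfl _)
  exact EVAux.key_bound hC hα1 hsupp hu0 hu.2 hv0 hv.2
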